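/- Let ℓ ≥ 1 and N ≥ 4. Define f(x) = 1/((1-x^{N-1})(1-2x^{N-1})⋯(1-ℓ x^{N-1})) - 1/(1-x^{N-1})^ℓ as a formal power series. Then the coefficients a_n of f satisfy: for ℓ ≥ 2, limsup_n a_n^{1/n} = ℓ^{1/(N-1)} > 1, i.e., the coefficients grow exponentially with rate ℓ^{1/(N-1)}. -/

import Mathlib

open PowerSeries Filter Finset Topology

/-! Auxiliary: the geometric-type series `Gs m a = ∑ a^k X^(m k)`, inverse of `1 - a X^m`. -/

noncomputable def Gs (m : ℕ) (a : ℚ) : PowerSeries ℚ :=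
  PowerSeries.mk fun n => if m ∣ n then a ^ (n / m) else 0

theorem Gs_mul (m : ℕ) (hm : 1 ≤ m) (a : ℚ) :
    (1 - PowerSeries.C a * PowerSeries.X ^ m) * Gs m a = 1 := by
  ext n
  rw [sub_mul, one_mul, map_sub, mul_assoc, coeff_C_mul, mul_comm (X ^ m) (Gs m a),
    coeff_mul_X_pow']
  simp only [Gs, coeff_mk, coeff_one]
  rcases Nat.eq_zero_or_pos n with rfl | hn
  · have h0 : ¬ m ≤ 0 := by omega
    simp [h0]
  · rw [if_neg (by omega : ¬ n = 0)]
    by_cases hd : m ∣ n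
    · obtain ⟨k, rfl⟩ := hd
      have hk : 1 ≤ k := by
        rcases Nat.eq_zero_or_pos k with rfl | h
        · simp at hn
        · exact h
      have hmn : m ≤ m * k := by nlinarith
      rw [if_pos (Dvd.intro k rfl), if_pos hmn, if_pos (Nat.dvd_sub (Dvd.intro k rfl) dvd_rfl)]
      have e1 : m * k / m = k := Nat.mul_div_cancel_left k (by omega)
      have e2 : (m * k - m) / m = k - 1 := by
        have h : m * k - m = m * (k - 1) := by rw [Nat.mul_sub, mul_one]
        rw [h, Nat.mul_div_cancel_left _ (by omega : 0 < m)]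
      rw [e1, e2, ← pow_succ' a (k - 1)]
      rw [(by omega : k - 1 + 1 = k), sub_self]
    · rw [if_neg hd]
      by_cases hmn : m ≤ n
      · have hnd : ¬ m ∣ n - m := by
          intro h
          exact hd (by have := Nat.dvd_add h (dvd_refl m); rwa [Nat.sub_add_cancel hmn] at this)
        rw [if_pos hmn, if_neg hnd, mul_zero, sub_zero]
      · rw [if_neg hmn, mul_zero, sub_zero]

theorem prodGs_inv (ℓ m : ℕ) (hm : 1 ≤ m) (c : ℕ → ℚ) :
    (∏ i ∈ range ℓ, (1 - PowerSeries.C (c i) * PowerSeries.X ^ m))⁻¹ =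
      ∏ i ∈ range ℓ, Gs m (c i) := by
  rw [PowerSeries.inv_eq_iff_mul_eq_one, ← Finset.prod_mul_distrib]
  · rw [Finset.prod_congr rfl fun i _ => by rw [mul_comm, Gs_mul m hm], Finset.prod_const_one]
  · rw [map_prod]
    have : ∀ i ∈ range ℓ, (constantCoeff) (1 - PowerSeries.C (c i) * X ^ m) = 1 := by
      intro i _
      simp [map_sub, map_mul, map_pow, constantCoeff_X, zero_pow (by omega : m ≠ 0)]
    rw [Finset.prod_congr rfl this, Finset.prod_const_one]
    exact one_ne_zero

theorem powGs_inv (ℓ m : ℕ) (hm : 1 ≤ m) :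
    (((1 : PowerSeries ℚ) - PowerSeries.X ^ m) ^ ℓ)⁻¹ = ∏ _i ∈ range ℓ, Gs m 1 := by
  rw [Finset.prod_const, card_range, PowerSeries.inv_eq_iff_mul_eq_one, ← mul_pow]
  · have h := Gs_mul m hm 1
    rw [map_one, one_mul] at h
    rw [mul_comm, h, one_pow]
  · rw [map_pow, map_sub, map_one, map_pow, constantCoeff_X, zero_pow (by omega : m ≠ 0),
      sub_zero, one_pow]
    exact one_ne_zero

theorem coeff_prodGs (ℓ m n : ℕ) (c : ℕ → ℚ) :
    PowerSeries.coeff n (∏ i ∈ range ℓ, Gs m (c i)) =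
      ∑ l ∈ finsuppAntidiag (range ℓ) n,
        ∏ i ∈ range ℓ, (if m ∣ l i then (c i) ^ (l i / m) else 0) := by
  rw [PowerSeries.coeff_prod]
  exact Finset.sum_congr rfl fun l _ => Finset.prod_congr rfl fun i _ => by
    simp [Gs, coeff_mk]

theorem card_finsuppAntidiag_le (ℓ n : ℕ) :
    (finsuppAntidiag (range ℓ) n).card ≤ (n + 1) ^ ℓ := by
  have h := Finset.card_le_card_of_injOn (s := finsuppAntidiag (range ℓ) n)
    (f := fun (l : ℕ →₀ ℕ) => (fun i : Fin ℓ => l i))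
    (t := Fintype.piFinset fun _ : Fin ℓ => Finset.range (n + 1)) ?_ ?_
  · calc (finsuppAntidiag (range ℓ) n).card
        ≤ (Fintype.piFinset fun _ : Fin ℓ => Finset.range (n + 1)).card := h
      _ = (n + 1) ^ ℓ := by
          rw [Fintype.card_piFinset]
          simp
  · intro l hl
    rw [Finset.mem_coe, Finset.mem_finsuppAntidiag] at hl
    rw [Finset.mem_coe, Fintype.mem_piFinset]
    intro i
    rw [Finset.mem_range, Nat.lt_succ_iff]
    calc l i ≤ ∑ j ∈ range ℓ, l j :=
        Finset.single_le_sum (fun j _ => Nat.zero_le _) (mem_range.2 i.isLt)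
      _ = n := hl.1
  · intro l₁ h₁ l₂ h₂ h
    rw [Finset.mem_coe, Finset.mem_finsuppAntidiag] at h₁ h₂
    ext i
    by_cases hi : i < ℓ
    · exact congrFun h ⟨i, hi⟩
    · have e₁ : l₁ i = 0 := by
        by_contra hne
        exact hi (mem_range.1 (h₁.2 (Finsupp.mem_support_iff.2 hne)))
      have e₂ : l₂ i = 0 := by
        by_contra hne
        exact hi (mem_range.1 (h₂.2 (Finsupp.mem_support_iff.2 hne)))
      rw [e₁, e₂]

theorem coeff_prodGs_not_dvd (ℓ m n : ℕ) (c : ℕ → ℚ) (hn : ¬ m ∣ n) :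
    PowerSeries.coeff n (∏ i ∈ range ℓ, Gs m (c i)) = 0 := by
  rw [coeff_prodGs]
  apply Finset.sum_eq_zero
  intro l hl
  rw [mem_finsuppAntidiag] at hl
  have : ∃ i ∈ range ℓ, ¬ m ∣ l i := by
    by_contra hall
    push_neg at hall
    exact hn (hl.1 ▸ Finset.dvd_sum hall)
  obtain ⟨i, hi, hnd⟩ := this
  exact Finset.prod_eq_zero hi (if_neg hnd)

theorem term_nonneg (ℓ m : ℕ) (c : ℕ → ℚ) (hc : ∀ i ∈ range ℓ, 0 ≤ c i) (l : ℕ →₀ ℕ) :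
    0 ≤ ∏ i ∈ range ℓ, (if m ∣ l i then (c i) ^ (l i / m) else 0) :=
  Finset.prod_nonneg fun i hi => by
    split
    · exact pow_nonneg (hc i hi) _
    · exact le_refl 0

theorem coeff_prodGs_lower (ℓ m j : ℕ) (hℓ : 1 ≤ ℓ) (hm : 1 ≤ m) (c : ℕ → ℚ)
    (hc : ∀ i ∈ range ℓ, 0 ≤ c i) :
    c (ℓ - 1) ^ j ≤ PowerSeries.coeff (m * j) (∏ i ∈ range ℓ, Gs m (c i)) := by
  rw [coeff_prodGs]
  set l₀ : ℕ →₀ ℕ := Finsupp.single (ℓ - 1) (m * j) with hl₀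
  have hmem : l₀ ∈ finsuppAntidiag (range ℓ) (m * j) := by
    rw [mem_finsuppAntidiag]
    constructor
    · rw [Finset.sum_eq_single_of_mem (ℓ - 1) (mem_range.2 (by omega))]
      · simp [hl₀]
      · intro b _ hb
        simp [hl₀, Finsupp.single_apply, (Ne.symm hb)]
    · exact (Finsupp.support_single_subset).trans (by simp; omega)
  have hval : ∏ i ∈ range ℓ, (if m ∣ l₀ i then (c i) ^ (l₀ i / m) else 0) = c (ℓ - 1) ^ j := by
    rw [Finset.prod_eq_single_of_mem (ℓ - 1) (mem_range.2 (by omega))]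
    · simp [hl₀, Nat.mul_div_cancel_left _ (by omega : 0 < m)]
    · intro b _ hb
      simp [hl₀, Finsupp.single_apply, Ne.symm hb]
  calc c (ℓ - 1) ^ j = _ := hval.symm
    _ ≤ _ := Finset.single_le_sum (fun l _ => term_nonneg ℓ m c hc l) hmem

theorem coeff_prodGs_upper (ℓ m j : ℕ) (hm : 1 ≤ m) (c : ℕ → ℚ) (d : ℚ) (hd : 0 ≤ d)
    (hc : ∀ i ∈ range ℓ, 0 ≤ c i) (hcd : ∀ i ∈ range ℓ, c i ≤ d) :
    PowerSeries.coeff (m * j) (∏ i ∈ range ℓ, Gs m (c i)) ≤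
      ((m * j + 1 : ℕ) ^ ℓ : ℚ) * d ^ j := by
  rw [coeff_prodGs]
  have hterm : ∀ l ∈ finsuppAntidiag (range ℓ) (m * j),
      ∏ i ∈ range ℓ, (if m ∣ l i then (c i) ^ (l i / m) else 0) ≤ d ^ j := by
    intro l hl
    rw [mem_finsuppAntidiag] at hl
    by_cases hall : ∀ i ∈ range ℓ, m ∣ l i
    · have e1 : ∏ i ∈ range ℓ, (if m ∣ l i then (c i) ^ (l i / m) else 0) =
          ∏ i ∈ range ℓ, (c i) ^ (l i / m) :=
        Finset.prod_congr rfl fun i hi => if_pos (hall i hi)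
      have e2 : ∑ i ∈ range ℓ, l i / m = j := by
        have h3 : m * ∑ i ∈ range ℓ, l i / m = m * j := by
          rw [Finset.mul_sum, Finset.sum_congr rfl fun i hi => Nat.mul_div_cancel' (hall i hi)]
          exact hl.1
        exact Nat.eq_of_mul_eq_mul_left (by omega) h3
      rw [e1]
      calc ∏ i ∈ range ℓ, (c i) ^ (l i / m)
          ≤ ∏ i ∈ range ℓ, d ^ (l i / m) :=
            Finset.prod_le_prod (fun i hi => pow_nonneg (hc i hi) _)
              (fun i hi => pow_le_pow_left₀ (hc i hi) (hcd i hi) _)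
        _ = d ^ (∑ i ∈ range ℓ, l i / m) := by rw [Finset.prod_pow_eq_pow_sum]
        _ = d ^ j := by rw [e2]
    · push_neg at hall
      obtain ⟨i, hi, hnd⟩ := hall
      rw [Finset.prod_eq_zero hi
        (show (if m ∣ l i then (c i) ^ (l i / m) else 0) = 0 from if_neg hnd)]
      exact pow_nonneg hd j
  calc ∑ l ∈ finsuppAntidiag (range ℓ) (m * j),
        ∏ i ∈ range ℓ, (if m ∣ l i then (c i) ^ (l i / m) else 0)
      ≤ ∑ _l ∈ finsuppAntidiag (range ℓ) (m * j), d ^ j := Finset.sum_le_sum hterm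
    _ = ((finsuppAntidiag (range ℓ) (m * j)).card : ℚ) * d ^ j := by
        rw [Finset.sum_const, nsmul_eq_mul]
    _ ≤ ((m * j + 1 : ℕ) ^ ℓ : ℚ) * d ^ j := by
        apply mul_le_mul_of_nonneg_right _ (pow_nonneg hd j)
        exact_mod_cast Nat.cast_le.2 (card_finsuppAntidiag_le ℓ (m * j))

set_option maxHeartbeats 1000000 in
theorem aux_tendsto (ℓ m : ℕ) (hℓ : 2 ≤ ℓ) (hm : 1 ≤ m) (q : ℕ → ℝ)
    (hq1 : ∀ j, (ℓ : ℝ) ^ j - ((m * j + 1 : ℕ) : ℝ) ^ ℓ ≤ q j)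
    (hq2 : ∀ j, |q j| ≤ ((m * j + 1 : ℕ) : ℝ) ^ ℓ * (ℓ : ℝ) ^ j) :
    Tendsto (fun j => |q j| ^ (((m * j : ℕ) : ℝ))⁻¹) atTop
      (𝓝 ((ℓ : ℝ) ^ ((m : ℝ)⁻¹))) := by
  have hℓ1 : (1 : ℝ) < (ℓ : ℝ) := by exact_mod_cast (by omega : 1 < ℓ)
  have hℓ0 : (0 : ℝ) < (ℓ : ℝ) := by linarith
  have hm0 : (0 : ℝ) < (m : ℝ) := by exact_mod_cast (by omega : 0 < m)
  -- m*j tends to infinity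
  have hmjnat : Tendsto (fun j : ℕ => m * j) atTop atTop :=
    tendsto_atTop_mono (fun j => Nat.le_mul_of_pos_left j (by omega)) tendsto_id
  have hmj : Tendsto (fun j : ℕ => ((m * j : ℕ) : ℝ)) atTop atTop :=
    tendsto_natCast_atTop_atTop.comp hmjnat
  have hmj1 : Tendsto (fun j : ℕ => ((m * j + 1 : ℕ) : ℝ)) atTop atTop :=
    tendsto_natCast_atTop_atTop.comp
      (tendsto_atTop_mono (fun j => by omega : ∀ j, m * j ≤ m * j + 1) hmjnat)
  set e : ℕ → ℝ := fun j => (((m * j : ℕ) : ℝ))⁻¹ with he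
  have he0 : Tendsto e atTop (𝓝 0) := hmj.inv_tendsto_atTop
  have he_nonneg : ∀ j, 0 ≤ e j := fun j => by positivity
  -- polynomial over exponential
  have hpoly : Tendsto (fun j : ℕ => ((m * j + 1 : ℕ) : ℝ) ^ ℓ / (ℓ : ℝ) ^ j) atTop (𝓝 0) := by
    have base : Tendsto (fun j : ℕ => (j : ℝ) ^ ℓ / (ℓ : ℝ) ^ j) atTop (𝓝 0) :=
      tendsto_pow_const_div_const_pow_of_one_lt ℓ hℓ1
    have hg : Tendsto (fun j : ℕ => ((2 * m : ℝ)) ^ ℓ * ((j : ℝ) ^ ℓ / (ℓ : ℝ) ^ j)) atTop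
        (𝓝 0) := by
      have := base.const_mul ((2 * m : ℝ) ^ ℓ)
      simpa using this
    apply squeeze_zero' ?_ ?_ hg
    · filter_upwards with j
      positivity
    · filter_upwards [eventually_ge_atTop 1] with j hj
      have h1 : ((m * j + 1 : ℕ) : ℝ) ≤ 2 * m * j := by
        push_cast
        have : (1 : ℝ) ≤ (m : ℝ) * j := by
          have : (1 : ℕ) ≤ m * j := Nat.one_le_iff_ne_zero.2 (by positivity)
          exact_mod_cast this
        nlinarith
      have h2 : ((m * j + 1 : ℕ) : ℝ) ^ ℓ ≤ (2 * m : ℝ) ^ ℓ * (j : ℝ) ^ ℓ := by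
        calc ((m * j + 1 : ℕ) : ℝ) ^ ℓ ≤ (2 * m * j : ℝ) ^ ℓ :=
            pow_le_pow_left₀ (by positivity) h1 ℓ
          _ = (2 * m : ℝ) ^ ℓ * (j : ℝ) ^ ℓ := by rw [mul_pow]
      rw [div_le_iff₀ (by positivity), mul_assoc,
        div_mul_cancel₀ _ (by positivity : ((ℓ : ℝ)) ^ j ≠ 0)]
      exact h2
  -- eventually the polynomial term is at most half of ℓ^j
  have ev : ∀ᶠ j : ℕ in atTop, ((m * j + 1 : ℕ) : ℝ) ^ ℓ ≤ (1 / 2) * (ℓ : ℝ) ^ j := by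
    filter_upwards [hpoly.eventually_le_const (by norm_num : (0 : ℝ) < 1 / 2)] with j hj
    rw [div_le_iff₀ (by positivity)] at hj
    linarith [hj]
  have evq : ∀ᶠ j : ℕ in atTop, (1 / 2) * (ℓ : ℝ) ^ j ≤ |q j| := by
    filter_upwards [ev] with j hj
    have := hq1 j
    have h2 := le_abs_self (q j)
    linarith
  have evqpos : ∀ᶠ j : ℕ in atTop, 0 < |q j| := by
    filter_upwards [evq] with j hj
    have : (0 : ℝ) < (1 / 2) * (ℓ : ℝ) ^ j := by positivity
    linarith
  set L : ℝ := Real.log ℓ / m with hL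
  set t : ℕ → ℝ := fun j => Real.log |q j| * e j with ht
  -- lower squeeze
  have hlo : Tendsto (fun j : ℕ => L - Real.log 2 * e j) atTop (𝓝 L) := by
    have h2 := he0.const_mul (Real.log 2)
    rw [mul_zero] at h2
    have h3 := (tendsto_const_nhds (x := L)).sub h2
    rw [sub_zero] at h3
    exact h3
  have hlogterm : Tendsto (fun j : ℕ => Real.log ((m * j + 1 : ℕ) : ℝ) * e j) atTop (𝓝 0) := by
    have hbase := Real.tendsto_pow_log_div_mul_add_atTop 1 (-1) 1 one_ne_zero
    have hcomp := hbase.comp hmj1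
    have heq : ∀ j : ℕ, (fun x : ℝ => Real.log x ^ 1 / (1 * x + -1)) (((m * j + 1 : ℕ) : ℝ)) =
        Real.log ((m * j + 1 : ℕ) : ℝ) * e j := by
      intro j
      have : (1 : ℝ) * ((m * j + 1 : ℕ) : ℝ) + -1 = ((m * j : ℕ) : ℝ) := by push_cast; ring
      simp only [pow_one, this, he]
      rw [div_eq_mul_inv]
    exact (hcomp.congr heq)
  have hhi : Tendsto (fun j : ℕ => (ℓ : ℝ) * (Real.log ((m * j + 1 : ℕ) : ℝ) * e j) + L) atTop
      (𝓝 L) := by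
    have h1 := hlogterm.const_mul (ℓ : ℝ)
    rw [mul_zero] at h1
    have h2 := h1.add (tendsto_const_nhds (x := L))
    rw [zero_add] at h2
    exact h2
  have hTt : Tendsto t atTop (𝓝 L) := by
    apply tendsto_of_tendsto_of_tendsto_of_le_of_le' hlo hhi
    · -- lower bound
      filter_upwards [evq, eventually_ge_atTop 1] with j hj hj1
      have hpos : (0 : ℝ) < (1 / 2) * (ℓ : ℝ) ^ j := by positivity
      have hlog : Real.log ((1 / 2) * (ℓ : ℝ) ^ j) ≤ Real.log |q j| :=
        Real.log_le_log hpos hj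
      have hcalc : Real.log ((1 / 2) * (ℓ : ℝ) ^ j) = j * Real.log ℓ - Real.log 2 := by
        rw [Real.log_mul (by norm_num) (by positivity), Real.log_pow, one_div,
          Real.log_inv]
        ring
      have hmul := mul_le_mul_of_nonneg_right hlog (he_nonneg j)
      rw [hcalc] at hmul
      have hjm : (j : ℝ) * Real.log ℓ * e j = L := by
        have hj0 : ((m * j : ℕ) : ℝ) = (m : ℝ) * j := by push_cast; ring
        have hjne : (j : ℝ) ≠ 0 := by
          have : (1 : ℝ) ≤ (j : ℝ) := by exact_mod_cast hj1
          linarith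
        rw [he]
        simp only [hj0, hL]
        field_simp
      calc L - Real.log 2 * e j = (j * Real.log ℓ - Real.log 2) * e j := by
            rw [sub_mul, hjm]
        _ ≤ t j := hmul
    · -- upper bound
      filter_upwards [evqpos, eventually_ge_atTop 1] with j hj hj1
      have hub : |q j| ≤ ((m * j + 1 : ℕ) : ℝ) ^ ℓ * (ℓ : ℝ) ^ j := hq2 j
      have hlog : Real.log |q j| ≤
          Real.log (((m * j + 1 : ℕ) : ℝ) ^ ℓ * (ℓ : ℝ) ^ j) := Real.log_le_log hj hub
      have hmj1pos : (0 : ℝ) < ((m * j + 1 : ℕ) : ℝ) := by positivity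
      have hcalc : Real.log (((m * j + 1 : ℕ) : ℝ) ^ ℓ * (ℓ : ℝ) ^ j) =
          (ℓ : ℝ) * Real.log ((m * j + 1 : ℕ) : ℝ) + j * Real.log ℓ := by
        rw [Real.log_mul (by positivity) (by positivity), Real.log_pow, Real.log_pow]
      have hmul := mul_le_mul_of_nonneg_right hlog (he_nonneg j)
      rw [hcalc] at hmul
      have hjm : (j : ℝ) * Real.log ℓ * e j = L := by
        have hj0 : ((m * j : ℕ) : ℝ) = (m : ℝ) * j := by push_cast; ring
        have hjne : (j : ℝ) ≠ 0 := by
          have : (1 : ℝ) ≤ (j : ℝ) := by exact_mod_cast hj1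
          linarith
        rw [he]
        simp only [hj0, hL]
        field_simp
      calc t j ≤ ((ℓ : ℝ) * Real.log ((m * j + 1 : ℕ) : ℝ) + j * Real.log ℓ) * e j := hmul
        _ = (ℓ : ℝ) * (Real.log ((m * j + 1 : ℕ) : ℝ) * e j) + L := by
            rw [add_mul, hjm]; ring
  -- conclude via exp
  have hexp : Tendsto (fun j => Real.exp (t j)) atTop (𝓝 (Real.exp L)) :=
    (Real.continuous_exp.tendsto L).comp hTt
  have hfinal : (ℓ : ℝ) ^ ((m : ℝ)⁻¹) = Real.exp L := by
    rw [Real.rpow_def_of_pos hℓ0, hL, div_eq_mul_inv]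
  rw [hfinal]
  apply hexp.congr'
  filter_upwards [evqpos] with j hj
  rw [Real.rpow_def_of_pos hj, ht]
-- main below

set_option maxHeartbeats 1000000 in
/-- For `ℓ ≥ 2` and `N ≥ 4`, the coefficients `a_n` of the formal power series
`f(x) = 1/((1-x^{N-1})(1-2x^{N-1})⋯(1-ℓx^{N-1})) - 1/(1-x^{N-1})^ℓ`
grow exponentially with rate `ℓ^{1/(N-1)} > 1`, i.e. `limsup_n a_n^{1/n} = ℓ^{1/(N-1)}`. -/
theorem eulerSeries_coeff_exponential_growth (ℓ N : ℕ) (hℓ : 2 ≤ ℓ) (hN : 4 ≤ N)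
    (f : PowerSeries ℚ)
    (hf : f = (∏ i ∈ Finset.range ℓ,
          (1 - PowerSeries.C ((i : ℚ) + 1) * PowerSeries.X ^ (N - 1)))⁻¹ -
        ((1 - PowerSeries.X ^ (N - 1) : PowerSeries ℚ) ^ ℓ)⁻¹) :
    Filter.limsup (fun n : ℕ => (|(PowerSeries.coeff n f : ℚ)| : ℝ) ^ ((n : ℝ)⁻¹)) atTop =
        (ℓ : ℝ) ^ (((N : ℝ) - 1)⁻¹) ∧
      (1 : ℝ) < (ℓ : ℝ) ^ (((N : ℝ) - 1)⁻¹) := by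
  set m := N - 1 with hmdef
  have hm : 1 ≤ m := by omega
  -- rewrite f in terms of Gs products
  have hf2 : f = (∏ i ∈ range ℓ, Gs m ((i : ℚ) + 1)) - ∏ _i ∈ range ℓ, Gs m 1 := by
    rw [hf, prodGs_inv ℓ m hm (fun i => (i : ℚ) + 1), powGs_inv ℓ m hm]
  -- vanishing of coefficients off multiples of m
  have hzero : ∀ n, ¬ m ∣ n → PowerSeries.coeff n f = 0 := by
    intro n hd
    rw [hf2, map_sub, coeff_prodGs_not_dvd ℓ m n (fun i => (i : ℚ) + 1) hd,
      coeff_prodGs_not_dvd ℓ m n (fun _ => 1) hd, sub_zero]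
  -- bounds for coefficients at multiples of m
  have hq1 : ∀ j, (ℓ : ℚ) ^ j - ((m * j + 1 : ℕ) ^ ℓ : ℚ) ≤ PowerSeries.coeff (m * j) f := by
    intro j
    have hH1 : (ℓ : ℚ) ^ j ≤
        PowerSeries.coeff (m * j) (∏ i ∈ range ℓ, Gs m ((i : ℚ) + 1)) := by
      have h := coeff_prodGs_lower ℓ m j (by omega) hm (fun i => (i : ℚ) + 1)
        (fun i _ => by positivity)
      have hcast : ((ℓ - 1 : ℕ) : ℚ) + 1 = (ℓ : ℚ) := by
        rw [Nat.cast_sub (by omega : 1 ≤ ℓ), Nat.cast_one]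
        ring
      beta_reduce at h
      rwa [hcast] at h
    have hK2 : PowerSeries.coeff (m * j) (∏ _i ∈ range ℓ, Gs m 1) ≤
        ((m * j + 1 : ℕ) ^ ℓ : ℚ) := by
      have h := coeff_prodGs_upper ℓ m j hm (fun _ => 1) 1 one_pos.le
        (fun i _ => one_pos.le) (fun i _ => le_refl 1)
      rwa [one_pow, mul_one] at h
    rw [hf2, map_sub]
    have := sub_le_sub hH1 hK2
    linarith [this]
  have hq2 : ∀ j, |PowerSeries.coeff (m * j) f| ≤
      ((m * j + 1 : ℕ) ^ ℓ : ℚ) * (ℓ : ℚ) ^ j := by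
    intro j
    have hH2 : PowerSeries.coeff (m * j) (∏ i ∈ range ℓ, Gs m ((i : ℚ) + 1)) ≤
        ((m * j + 1 : ℕ) ^ ℓ : ℚ) * (ℓ : ℚ) ^ j := by
      apply coeff_prodGs_upper ℓ m j hm (fun i => (i : ℚ) + 1) (ℓ : ℚ) (by positivity)
        (fun i _ => by positivity)
      intro i hi
      have h1 : i + 1 ≤ ℓ := Nat.succ_le_of_lt (mem_range.1 hi)
      exact_mod_cast h1
    have hK1 : (0 : ℚ) ≤ PowerSeries.coeff (m * j) (∏ _i ∈ range ℓ, Gs m 1) := by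
      have h := coeff_prodGs_lower ℓ m j (by omega) hm (fun _ => 1) (fun i _ => one_pos.le)
      have : ((fun _ : ℕ => (1 : ℚ)) (ℓ - 1)) ^ j = 1 := one_pow j
      rw [this] at h
      linarith
    have hlow := hq1 j
    have hP1 : (1 : ℚ) ≤ (ℓ : ℚ) ^ j := one_le_pow₀ (by exact_mod_cast (by omega : 1 ≤ ℓ))
    have hP0 : (0 : ℚ) ≤ ((m * j + 1 : ℕ) ^ ℓ : ℚ) := by positivity
    rw [abs_le]
    constructor
    · nlinarith
    · rw [hf2, map_sub]
      nlinarith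
  -- real-valued coefficient sequence along multiples of m
  set q : ℕ → ℝ := fun j => ((PowerSeries.coeff (m * j) f : ℚ) : ℝ) with hqdef
  have hq1R : ∀ j, (ℓ : ℝ) ^ j - ((m * j + 1 : ℕ) : ℝ) ^ ℓ ≤ q j := by
    intro j
    have := hq1 j
    rw [hqdef]
    push_cast
    exact_mod_cast this
  have hq2R : ∀ j, |q j| ≤ ((m * j + 1 : ℕ) : ℝ) ^ ℓ * (ℓ : ℝ) ^ j := by
    intro j
    have := hq2 j
    rw [hqdef]
    push_cast [← Rat.cast_abs]
    exact_mod_cast this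
  have htq := aux_tendsto ℓ m hℓ hm q hq1R hq2R
  set L : ℝ := (ℓ : ℝ) ^ ((m : ℝ)⁻¹) with hLdef
  -- identify the exponent
  have hNm : ((N : ℝ) - 1) = (m : ℝ) := by
    rw [hmdef, Nat.cast_sub (by omega : 1 ≤ N), Nat.cast_one]
  rw [hNm]
  have hℓ1 : (1 : ℝ) < (ℓ : ℝ) := by exact_mod_cast (by omega : 1 < ℓ)
  have hm0 : (0 : ℝ) < (m : ℝ) := by exact_mod_cast (by omega : 0 < m)
  have hL1 : (1 : ℝ) < L := by
    rw [hLdef, Real.one_lt_rpow_iff_of_pos (by linarith)]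
    left
    exact ⟨hℓ1, by positivity⟩
  refine ⟨?_, hL1⟩
  have hL0 : (0 : ℝ) < L := lt_trans one_pos hL1
  set u : ℕ → ℝ := fun n : ℕ => (|(PowerSeries.coeff n f : ℚ)| : ℝ) ^ ((n : ℝ)⁻¹) with hu
  have htu : Tendsto (fun j => u (m * j)) atTop (𝓝 L) := by
    apply htq.congr
    intro j
    simp only [hu, hqdef, Rat.cast_abs]
  have hunonneg : ∀ n, 0 ≤ u n := by
    intro n
    rw [hu]
    positivity
  have huzero : ∀ n, 1 ≤ n → ¬ m ∣ n → u n = 0 := by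
    intro n h1 hd
    rw [hu]
    simp only [hzero n hd, abs_zero, Rat.cast_zero]
    exact Real.zero_rpow (inv_ne_zero (Nat.cast_ne_zero.2 (by omega)))
  have claim1 : ∀ ε : ℝ, 0 < ε → ∀ᶠ n in atTop, u n ≤ L + ε := by
    intro ε hε
    have hev := htu.eventually_le_const (lt_add_of_pos_right L hε)
    obtain ⟨J, hJ⟩ := eventually_atTop.1 hev
    rw [eventually_atTop]
    refine ⟨m * J + 1, fun n hn => ?_⟩
    by_cases hd : m ∣ n
    · obtain ⟨j, rfl⟩ := hd
      refine hJ j ?_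
      by_contra hc
      push_neg at hc
      have h2 : m * (j + 1) ≤ m * J := Nat.mul_le_mul_left m hc
      have h3 : m * (j + 1) = m * j + m := by ring
      omega
    · rw [huzero n (by omega) hd]
      linarith
  have hbdd : IsBoundedUnder (· ≤ ·) atTop u :=
    isBoundedUnder_of_eventually_le (claim1 1 one_pos)
  have hcob : IsCoboundedUnder (· ≤ ·) atTop u :=
    isCoboundedUnder_le_of_le atTop (x := 0) hunonneg
  have h1 : limsup u atTop ≤ L := by
    by_contra hc
    push_neg at hc
    have hε : (0 : ℝ) < (limsup u atTop - L) / 2 := by linarith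
    have := limsup_le_of_le hcob (claim1 _ hε)
    linarith
  have h2 : L ≤ limsup u atTop := by
    by_contra hc
    push_neg at hc
    have hε : (0 : ℝ) < (L - limsup u atTop) / 2 := by linarith
    have hfreq : ∃ᶠ n in atTop, L - (L - limsup u atTop) / 2 ≤ u n := by
      have hev := htu.eventually_const_le
        (show L - (L - limsup u atTop) / 2 < L by linarith)
      obtain ⟨J, hJ⟩ := eventually_atTop.1 hev
      rw [frequently_atTop]
      intro a
      refine ⟨m * max J a, ?_, hJ (max J a) (le_max_left _ _)⟩
      calc a ≤ max J a := le_max_right _ _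
        _ ≤ m * max J a := Nat.le_mul_of_pos_left _ (by omega)
    have := le_limsup_of_frequently_le hfreq hbdd
    linarith
  exact le_antisymm h1 h2
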